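/- Let R be a commutative ring containing C(t), σ_q a ring automorphism of R extending f(t) ↦ f(qt), and q of multiplicative order N > 1. If δ = (1/((q-1)t))(σ_q - id_R) satisfies δ^N = 0 (as a composite of additive endomorphisms), then σ_q^N = id_R. -/

import Mathlib

/-- Left multiplication by `algebraMap K R c`, as a ring hom into additive endomorphisms. -/
private def mulLeftHom {K S : Type*} [CommSemiring K] [Semiring S] [Algebra K S] :
    K →+* AddMonoid.End S where
  toFun c := AddMonoidHom.mulLeft (algebraMap K S c)
  map_one' := AddMonoidHom.ext fun x => by
    show algebraMap K S 1 * x = x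
    rw [map_one, one_mul]
  map_mul' a b := AddMonoidHom.ext fun x => by
    show algebraMap K S (a * b) * x = algebraMap K S a * (algebraMap K S b * x)
    rw [map_mul, mul_assoc]
  map_zero' := AddMonoidHom.ext fun x => by
    show algebraMap K S 0 * x = 0
    rw [map_zero, zero_mul]
  map_add' a b := AddMonoidHom.ext fun x => by
    show algebraMap K S (a + b) * x = algebraMap K S a * x + algebraMap K S b * x
    rw [map_add, add_mul]

private lemma prod_range_X_sub_C_pow {K : Type*} [Field K] {q : K} {N : ℕ} (hN : 0 < N)
    (hq : IsPrimitiveRoot q N) :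
    ∏ i ∈ Finset.range N, (Polynomial.X - Polynomial.C (q ^ i)) =
      Polynomial.X ^ N - 1 := by
  classical
  have hinj : Set.InjOn (q ^ ·) (Finset.range N) := fun i hi j hj hij =>
    hq.pow_inj (Finset.mem_range.1 hi) (Finset.mem_range.1 hj) hij
  have himg : Finset.image (q ^ ·) (Finset.range N) = Polynomial.nthRootsFinset N (1 : K) := by
    apply Finset.eq_of_subset_of_card_le
    · intro x hx
      obtain ⟨i, -, rfl⟩ := Finset.mem_image.1 hx
      refine (Polynomial.mem_nthRootsFinset hN (1 : K)).2 ?_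
      rw [← pow_mul, mul_comm, pow_mul, hq.pow_eq_one, one_pow]
    · rw [hq.card_nthRootsFinset, Finset.card_image_of_injOn hinj, Finset.card_range]
  rw [Polynomial.X_pow_sub_one_eq_prod hN hq, ← himg, Finset.prod_image hinj]

/-- Let `R ⊇ C(t)` be a commutative ring, `σ_q` a ring automorphism of `R` with
`σ_q(t) = q·t` and fixing `C`, where `q` is a primitive `N`-th root of unity
(`N > 1`), and `t` invertible.  If `δ = (1/((q-1)t))(σ_q - id)` satisfies
`δ^N = 0` (as an `N`-fold composite), then `σ_q^N = id`. -/
theorem sigma_pow_orderOf_eq_id {C R : Type*} [Field C] [CommRing R] [Algebra C R]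
    (q : C) (N : ℕ) (hN : 1 < N) (hq : IsPrimitiveRoot q N)
    (t : Rˣ) (σ : R ≃+* R)
    (hσC : ∀ c : C, σ (algebraMap C R c) = algebraMap C R c)
    (hσt : σ (t : R) = algebraMap C R q * t)
    (δ : R → R)
    (hδ : ∀ x, δ x = algebraMap C R (q - 1)⁻¹ * (↑t⁻¹ : R) * (σ x - x))
    (h : δ^[N] = fun _ => (0 : R)) :
    ∀ x, (⇑σ)^[N] x = x := by
  have hNpos : 0 < N := lt_trans one_pos hN
  have hq0 : q ≠ 0 := by
    intro h0
    have h1 := hq.pow_eq_one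
    rw [h0, zero_pow hNpos.ne'] at h1
    exact one_ne_zero h1.symm
  have hq1 : q - 1 ≠ 0 := sub_ne_zero.2 (hq.ne_one hN)
  -- the operator algebra
  set f : C →+* AddMonoid.End R := mulLeftHom with hfdef
  set s : AddMonoid.End R := ((σ : R →+* R) : R →+ R) with hsdef
  have hfapp : ∀ (c : C) (x : R), f c x = algebraMap C R c * x := fun _ _ => rfl
  have hsapp : ∀ x : R, s x = σ x := fun _ => rfl
  have hcomm : ∀ c : C, Commute (f c) s := by
    intro c
    refine AddMonoidHom.ext fun x => ?_
    show algebraMap C R c * σ x = σ (algebraMap C R c * x)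
    rw [map_mul, hσC]
  set φ : Polynomial C →+* AddMonoid.End R := Polynomial.eval₂RingHom' f s hcomm with hφdef
  have hφC : ∀ c : C, φ (Polynomial.C c) = f c := fun c => Polynomial.eval₂_C f s
  have hφX : φ Polynomial.X = s := Polynomial.eval₂_X f s
  set P : ℕ → Polynomial C :=
    fun n => ∏ i ∈ Finset.range n, (Polynomial.C ((q ^ i)⁻¹) * Polynomial.X - 1) with hPdef
  -- basic unit computations
  have hmapq : algebraMap C R q * algebraMap C R q⁻¹ = 1 := by
    rw [← map_mul, mul_inv_cancel₀ hq0, map_one]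
  have htt : (↑t : R) * ↑t⁻¹ = 1 := t.mul_inv
  have hσtinv : σ (↑t⁻¹ : R) = algebraMap C R q⁻¹ * ↑t⁻¹ := by
    calc σ (↑t⁻¹ : R)
        = σ ↑t⁻¹ * ((algebraMap C R q * ↑t) * (algebraMap C R q⁻¹ * ↑t⁻¹)) := by
          have h1 : (algebraMap C R q * ↑t) * (algebraMap C R q⁻¹ * ↑t⁻¹) = 1 := by
            calc (algebraMap C R q * ↑t) * (algebraMap C R q⁻¹ * ↑t⁻¹)
                = (algebraMap C R q * algebraMap C R q⁻¹) * ((↑t : R) * ↑t⁻¹) := by ring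
              _ = 1 := by rw [hmapq, htt, one_mul]
          rw [h1, mul_one]
      _ = (σ ↑t⁻¹ * σ ↑t) * (algebraMap C R q⁻¹ * ↑t⁻¹) := by rw [hσt]; ring
      _ = algebraMap C R q⁻¹ * ↑t⁻¹ := by
          rw [← map_mul, Units.inv_mul, map_one, one_mul]
  -- main induction
  have key : ∀ n : ℕ, ∀ x : R,
      δ^[n] x = algebraMap C R ((q - 1)⁻¹ ^ n) * (↑t⁻¹ : R) ^ n * φ (P n) x := by
    intro n
    induction n with
    | zero =>
      intro x
      simp [hPdef]
    | succ n ih =>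
      intro x
      have hPsucc : φ (P (n + 1)) x = algebraMap C R ((q ^ n)⁻¹) * σ (φ (P n) x) - φ (P n) x := by
        have h1 : P (n + 1) = (Polynomial.C ((q ^ n)⁻¹) * Polynomial.X - 1) * P n := by
          simp only [hPdef]
          rw [Finset.prod_range_succ, mul_comm]
        rw [h1, map_mul, map_sub, map_mul, hφC, hφX, map_one]
        rfl
      rw [Function.iterate_succ_apply', ih x, hδ, hPsucc]
      simp only [map_mul, hσC, ← inv_pow, map_pow, hσtinv, mul_pow]
      ring
  -- at n = N the iterate vanishes, so φ (P N) kills everything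
  have hPN0 : ∀ x : R, φ (P N) x = 0 := by
    intro x
    have h0 : algebraMap C R ((q - 1)⁻¹ ^ N) * (↑t⁻¹ : R) ^ N * φ (P N) x = 0 := by
      rw [← key N x, h]
    have ha : algebraMap C R ((q - 1) ^ N) * algebraMap C R ((q - 1)⁻¹ ^ N) = 1 := by
      rw [← map_mul, ← mul_pow, mul_inv_cancel₀ hq1, one_pow, map_one]
    have ht : (↑t : R) ^ N * (↑t⁻¹ : R) ^ N = 1 := by
      rw [← mul_pow, htt, one_pow]
    calc φ (P N) x
        = (algebraMap C R ((q - 1) ^ N) * algebraMap C R ((q - 1)⁻¹ ^ N)) *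
            ((↑t : R) ^ N * (↑t⁻¹ : R) ^ N) * φ (P N) x := by rw [ha, ht]; ring
      _ = (algebraMap C R ((q - 1) ^ N) * (↑t : R) ^ N) *
            (algebraMap C R ((q - 1)⁻¹ ^ N) * (↑t⁻¹ : R) ^ N * φ (P N) x) := by ring
      _ = 0 := by rw [h0, mul_zero]
  -- compute P N
  set v : C := ∏ i ∈ Finset.range N, (q ^ i)⁻¹ with hvdef
  have hv0 : v ≠ 0 := Finset.prod_ne_zero_iff.2 fun i _ => inv_ne_zero (pow_ne_zero i hq0)
  have hPN : P N = Polynomial.C v * (Polynomial.X ^ N - 1) := by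
    calc P N
        = ∏ i ∈ Finset.range N,
            (Polynomial.C ((q ^ i)⁻¹) * (Polynomial.X - Polynomial.C (q ^ i))) := by
          refine Finset.prod_congr rfl fun i _ => ?_
          rw [mul_sub, ← Polynomial.C_mul, inv_mul_cancel₀ (pow_ne_zero i hq0), Polynomial.C_1]
      _ = (∏ i ∈ Finset.range N, Polynomial.C ((q ^ i)⁻¹)) *
            ∏ i ∈ Finset.range N, (Polynomial.X - Polynomial.C (q ^ i)) :=
          Finset.prod_mul_distrib
      _ = Polynomial.C v * (Polynomial.X ^ N - 1) := by
          rw [prod_range_X_sub_C_pow hNpos hq, hvdef, map_prod]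
  -- powers of s are iterates of σ
  have hspow : ∀ (n : ℕ) (x : R), (s ^ n) x = (⇑σ)^[n] x := by
    intro n
    induction n with
    | zero => intro x; rfl
    | succ n ih =>
      intro x
      rw [Function.iterate_succ_apply, pow_succ]
      exact ih (σ x)
  -- conclude
  intro x
  have h1 : φ (P N) x = algebraMap C R v * ((⇑σ)^[N] x - x) := by
    rw [hPN, map_mul, hφC, map_sub, map_pow, hφX, map_one]
    show f v ((s ^ N - 1) x) = _
    have h2 : (s ^ N - 1 : AddMonoid.End R) x = (⇑σ)^[N] x - x := by
      show (s ^ N) x - (1 : AddMonoid.End R) x = _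
      rw [hspow]
      rfl
    rw [h2, hfapp]
  have h3 : algebraMap C R v * ((⇑σ)^[N] x - x) = 0 := by rw [← h1, hPN0]
  have h4 : (⇑σ)^[N] x - x = 0 := by
    calc (⇑σ)^[N] x - x
        = (algebraMap C R v⁻¹ * algebraMap C R v) * ((⇑σ)^[N] x - x) := by
          rw [← map_mul, inv_mul_cancel₀ hv0, map_one, one_mul]
      _ = algebraMap C R v⁻¹ * (algebraMap C R v * ((⇑σ)^[N] x - x)) := by ring
      _ = 0 := by rw [h3, mul_zero]
  exact sub_eq_zero.1 h4
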